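/- Converse construction: given a finite system of k linear homogeneous equations Σ_i b_{t,i}·n_i = 0 (t = 1,…,k) with integer coefficients b_{t,i}, choose distinct primes p₁,…,p_k and set a_i = ∏_t p_t^{b_{t,i}} ∈ ℚ₊. Then for every vector (n₁,…,nₘ) ∈ ℕᵐ, ∏_i a_i^{n_i} = 1 if and only if (n₁,…,nₘ) solves the system. -/

import Mathlib

private lemma zpow_sum₀ {ι : Type*} (s : Finset ι) (x : ℚ) (hx : x ≠ 0) (e : ι → ℤ) :
    x ^ (∑ i ∈ s, e i) = ∏ i ∈ s, x ^ e i := by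
  induction s using Finset.cons_induction with
  | empty => simp
  | cons i s hi ih => rw [Finset.sum_cons, Finset.prod_cons, zpow_add₀ hx, ih]

private lemma padicValRat_prod {ι : Type*} (q : ℕ) [Fact q.Prime] (s : Finset ι)
    (f : ι → ℚ) (hf : ∀ i ∈ s, f i ≠ 0) :
    padicValRat q (∏ i ∈ s, f i) = ∑ i ∈ s, padicValRat q (f i) := by
  induction s using Finset.cons_induction with
  | empty => simp
  | cons i s hi ih =>
      rw [Finset.prod_cons, Finset.sum_cons,
        padicValRat.mul (hf i (Finset.mem_cons_self i s))
          (Finset.prod_ne_zero_iff.2 fun j hj => hf j (Finset.mem_cons_of_mem hj)),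
        ih fun j hj => hf j (Finset.mem_cons_of_mem hj)]

private lemma padicValRat_zpow (q : ℕ) [Fact q.Prime] {x : ℚ} (hx : x ≠ 0) (z : ℤ) :
    padicValRat q (x ^ z) = z * padicValRat q x := by
  rcases z.eq_nat_or_neg with ⟨n, rfl | rfl⟩
  · rw [zpow_natCast, padicValRat.pow x]
  · rw [zpow_neg, zpow_natCast, padicValRat.inv, padicValRat.pow x]; ring

/-- Converse construction: given integer coefficients `b t i` of `k` linear homogeneous
equations in `m` unknowns, distinct primes `p t`, and `a i = ∏ t, p t ^ b t i ∈ ℚ`,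
a vector `n : Fin m → ℕ` satisfies `∏ i, a i ^ n i = 1` iff it solves the system. -/
theorem stateless_dfamw_converse {k m : ℕ} (b : Fin k → Fin m → ℤ)
    (p : Fin k → ℕ) (hp : ∀ t, (p t).Prime) (hpinj : Function.Injective p)
    (a : Fin m → ℚ) (ha : ∀ i, a i = ∏ t, (p t : ℚ) ^ b t i)
    (n : Fin m → ℕ) :
    (∏ i, a i ^ n i) = 1 ↔ ∀ t, (∑ i, b t i * n i) = 0 := by
  have hpne : ∀ t, ((p t : ℚ)) ≠ 0 := fun t => by
    exact_mod_cast (hp t).ne_zero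
  have key : (∏ i, a i ^ n i) = ∏ t, (p t : ℚ) ^ (∑ i, b t i * n i) := by
    have : ∀ i, a i ^ n i = ∏ t, (p t : ℚ) ^ (b t i * (n i : ℤ)) := by
      intro i
      rw [ha i, ← Finset.prod_pow]
      refine Finset.prod_congr rfl fun t _ => ?_
      rw [zpow_mul, zpow_natCast]
    simp_rw [this]
    rw [Finset.prod_comm]
    exact Finset.prod_congr rfl fun t _ => (zpow_sum₀ _ _ (hpne t) _).symm
  rw [key]
  constructor
  · intro h s
    haveI : Fact (p s).Prime := ⟨hp s⟩
    have h2 := congrArg (padicValRat (p s)) h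
    rw [padicValRat_prod (p s) _ _ (fun t _ => zpow_ne_zero _ (hpne t))] at h2
    simp only [padicValRat.one] at h2
    have hval : ∀ t, padicValRat (p s) ((p t : ℚ) ^ (∑ i, b t i * n i))
        = if t = s then (∑ i, b t i * n i) else 0 := by
      intro t
      rw [padicValRat_zpow (p s) (hpne t)]
      by_cases hts : t = s
      · subst hts; rw [padicValRat.self (hp t).one_lt, mul_one, if_pos rfl]
      · rw [if_neg hts, ← padicValRat_of_nat,
          padicValNat.eq_zero_of_not_dvd ((hp s).coprime_iff_not_dvd.mp
              ((Nat.coprime_primes (hp s) (hp t)).2 fun he => hts (hpinj he).symm))]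
        simp
    simp_rw [hval, Finset.sum_ite_eq'] at h2
    simpa using h2
  · intro h
    simp [h]
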